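/- Let Γ be a finitely generated group with word length |·|_w and another length function |·| satisfying (1/L)|g|_w − c ≤ |g| ≤ L|g|_w + c. Let π be a unitary representation of Γ on H. Suppose (i) there exist w ≠ 0 and C with Σ_{g : |g|_w = n} |⟨π(g)v, w⟩|² ≤ C‖v‖² for all n and all v (the Good Vector Bound for w), and (ii) there exist h, c' > 0 and arbitrarily large R with Σ_{g ∈ A_{R,h}} |⟨π(g)v, w⟩|²/(1+R)² ≥ c'‖v‖²‖w‖² for some fixed v ≠ 0, where A_{R,h} = {g : |g| ∈ [R−h, R+h]}. Then one obtains a contradiction; i.e., (i) and (ii) cannot both hold. -/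

import Mathlib

/-- Core argument of Theorem 6.2 (monotony): the Good Vector Bound (i) and the
quadratic lower bound from asymptotic orthogonality (ii) cannot both hold. -/
theorem gvb_contradiction {Γ : Type*} [Group Γ]
    {H : Type*} [NormedAddCommGroup H] [InnerProductSpace ℂ H]
    (ℓw : Γ → ℕ) (ℓ : Γ → ℝ) (L c : ℝ) (hL : 1 ≤ L) (hc : 0 ≤ c)
    (hQI₁ : ∀ g, (ℓw g : ℝ) / L - c ≤ ℓ g)
    (hQI₂ : ∀ g, ℓ g ≤ L * (ℓw g : ℝ) + c)
    (S : ℕ → Finset Γ) (hS : ∀ n g, g ∈ S n ↔ ℓw g = n)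
    (π : Γ →* (H ≃ₗᵢ[ℂ] H))
    (w : H) (hw : w ≠ 0) (C : ℝ)
    (hGVB : ∀ (n : ℕ) (v : H), ∑ g ∈ S n, ‖(inner ℂ (π g v) w : ℂ)‖ ^ 2 ≤ C * ‖v‖ ^ 2)
    (h c' : ℝ) (hh : 0 ≤ h) (hc' : 0 < c')
    (A : ℝ → Finset Γ) (hA : ∀ R g, g ∈ A R ↔ ℓ g ∈ Set.Icc (R - h) (R + h))
    (v : H) (hv : v ≠ 0)
    (hlower : ∀ R₀ : ℝ, ∃ R ≥ R₀, c' * ‖v‖ ^ 2 * ‖w‖ ^ 2 ≤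
      (∑ g ∈ A R, ‖(inner ℂ (π g v) w : ℂ)‖ ^ 2) / (1 + R) ^ 2) :
    False := by
  classical
  have hL0 : (0:ℝ) < L := lt_of_lt_of_le one_pos hL
  set K : ℝ := c' * ‖v‖ ^ 2 * ‖w‖ ^ 2 with hKdef
  have hvpos : (0:ℝ) < ‖v‖ := norm_pos_iff.2 hv
  have hwpos : (0:ℝ) < ‖w‖ := norm_pos_iff.2 hw
  have hKpos : 0 < K := by positivity
  have hC0 : 0 ≤ C * ‖v‖ ^ 2 := by
    refine le_trans (Finset.sum_nonneg fun g _ => by positivity) (hGVB 0 v)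
  set M : ℝ := L * (1 + h + c) + 2 with hMdef
  have hM0 : 0 < M := by positivity
  obtain ⟨R, hRge, hlow⟩ := hlower (M * (C * ‖v‖ ^ 2) / K)
  have hR0 : 0 ≤ R := le_trans (by positivity) hRge
  have h1R : (0:ℝ) < 1 + R := by linarith
  set N : ℕ := ⌈L * (R + h + c)⌉₊ with hNdef
  have hsub : A R ⊆ (Finset.range (N + 1)).biUnion S := by
    intro g hg
    rw [hA] at hg
    have h1 := hQI₁ g
    have h2 : (ℓw g : ℝ) ≤ L * (R + h + c) := by
      have : (ℓw g : ℝ) / L ≤ R + h + c := by linarith [hg.2]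
      calc (ℓw g : ℝ) = L * ((ℓw g : ℝ) / L) := by field_simp
        _ ≤ L * (R + h + c) := by
            exact mul_le_mul_of_nonneg_left this (le_of_lt hL0)
    have hle : ℓw g ≤ N := by
      have := Nat.ceil_mono h2
      simpa using this
    exact Finset.mem_biUnion.2 ⟨ℓw g, Finset.mem_range.2 (Nat.lt_succ_of_le hle),
      (hS _ g).2 rfl⟩
  have hdisj : (↑(Finset.range (N + 1)) : Set ℕ).PairwiseDisjoint S := by
    intro a _ b _ hab
    refine Finset.disjoint_left.2 fun g hga hgb => ?_
    exact hab (((hS a g).1 hga).symm.trans ((hS b g).1 hgb))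
  have hsum : (∑ g ∈ A R, ‖(inner ℂ (π g v) w : ℂ)‖ ^ 2) ≤ (N + 1 : ℝ) * (C * ‖v‖ ^ 2) := by
    calc (∑ g ∈ A R, ‖(inner ℂ (π g v) w : ℂ)‖ ^ 2)
        ≤ ∑ g ∈ (Finset.range (N + 1)).biUnion S, ‖(inner ℂ (π g v) w : ℂ)‖ ^ 2 :=
          Finset.sum_le_sum_of_subset_of_nonneg hsub (fun _ _ _ => by positivity)
      _ = ∑ n ∈ Finset.range (N + 1), ∑ g ∈ S n, ‖(inner ℂ (π g v) w : ℂ)‖ ^ 2 :=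
          Finset.sum_biUnion hdisj
      _ ≤ ∑ _n ∈ Finset.range (N + 1), C * ‖v‖ ^ 2 :=
          Finset.sum_le_sum fun n _ => hGVB n v
      _ = (N + 1 : ℝ) * (C * ‖v‖ ^ 2) := by
          simp [Finset.sum_const, Finset.card_range, nsmul_eq_mul]
  have hN1 : (N : ℝ) + 1 ≤ M * (1 + R) := by
    have hceil : (N : ℝ) < L * (R + h + c) + 1 :=
      Nat.ceil_lt_add_one (by positivity)
    nlinarith [mul_nonneg (le_of_lt hL0) hR0]
  have hKR : K * (1 + R) ^ 2 ≤ ∑ g ∈ A R, ‖(inner ℂ (π g v) w : ℂ)‖ ^ 2 :=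
    (le_div_iff₀ (by positivity)).1 hlow
  have hR₀ : M * (C * ‖v‖ ^ 2) ≤ K * R := by
    have := mul_le_mul_of_nonneg_left hRge (le_of_lt hKpos)
    rwa [mul_div_cancel₀ _ (ne_of_gt hKpos)] at this
  have hchain : K * (1 + R) ^ 2 ≤ M * (1 + R) * (C * ‖v‖ ^ 2) := by
    calc K * (1 + R) ^ 2 ≤ (N + 1 : ℝ) * (C * ‖v‖ ^ 2) := le_trans hKR hsum
      _ ≤ M * (1 + R) * (C * ‖v‖ ^ 2) := mul_le_mul_of_nonneg_right hN1 hC0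
  nlinarith [mul_le_mul_of_nonneg_right hR₀ (le_of_lt h1R), mul_pos hKpos h1R]
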